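/- For any positive integer p, the constrained joint spectral radius is bounded by the constrained p-radius on both sides: ρ_p(G,A) ≤ ρ(G,A) ≤ 2^{h(E)/p} · ρ_p(G,A), where h(E) is the entropy of the edge shift of G. -/
import Mathlib


open scoped Classical
open Filter MvPolynomial

/-- The Frobenius norm, a submultiplicative matrix norm. -/
noncomputable def frob {a b : ℕ} (M : Matrix (Fin a) (Fin b) ℝ) : ℝ :=
  Real.sqrt (∑ i, ∑ j, (M i j)^2)

/-- The set `E_k` of paths of length `k` in the labeled graph with edge set `E ⊆ V × V × L`:
sequences of `k` edges of `E` such that the target of each edge is the source of the next. -/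
noncomputable def pathSet {V L : Type*} [Fintype V] [Fintype L]
    (E : Finset (V × V × L)) (k : ℕ) : Finset (Fin k → V × V × L) :=
  Finset.univ.filter (fun s =>
    (∀ i, s i ∈ E) ∧
    ∀ (i : ℕ) (h : i + 1 < k), (s ⟨i, Nat.lt_of_succ_lt h⟩).2.1 = (s ⟨i+1, h⟩).1)

/-- The sequence of labels along a path. -/
def labels {V L : Type*} {k : ℕ} (s : Fin k → V × V × L) : Fin k → L :=
  fun i => (s i).2.2

/-- The product of matrices along a label sequence: `A_s = A_{σ_k} ⋯ A_{σ_1}`. -/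
noncomputable def prodA {n : ℕ} {L : Type*} (A : L → Matrix (Fin n) (Fin n) ℝ)
    {k : ℕ} (σ : Fin k → L) : Matrix (Fin n) (Fin n) ℝ :=
  ((List.ofFn σ).reverse.map A).prod

/-- Maximum of a real-valued function over a (nonempty) finite set. -/
noncomputable def maxOver {α : Type*} (s : Finset α) (f : α → ℝ) : ℝ :=
  sSup (f '' ↑s)

/-- Strong connectivity: every node reaches every node by a path of length ≥ 1. -/
def StronglyConnected {V L : Type*} [Fintype V] [Fintype L]
    (E : Finset (V × V × L)) : Prop :=
  ∀ u v : V, ∃ k : ℕ, ∃ s ∈ pathSet E (k+1), (s 0).1 = u ∧ (s (Fin.last k)).2.1 = v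

lemma frob_nonneg {a b : ℕ} (M : Matrix (Fin a) (Fin b) ℝ) : 0 ≤ frob M :=
  Real.sqrt_nonneg _

lemma mem_pathSet_iff {V L : Type*} [Fintype V] [Fintype L]
    (E : Finset (V × V × L)) (k : ℕ) (s : Fin k → V × V × L) :
    s ∈ pathSet E k ↔ (∀ i, s i ∈ E) ∧
      ∀ (i : ℕ) (h : i + 1 < k), (s ⟨i, Nat.lt_of_succ_lt h⟩).2.1 = (s ⟨i+1, h⟩).1 := by
  simp [pathSet]

lemma pathSet_nonempty {V L : Type*} [Fintype V] [Fintype L] [Nonempty V]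
    {E : Finset (V × V × L)} (hSC : StronglyConnected E) (k : ℕ) :
    (pathSet E k).Nonempty := by
  induction k with
  | zero =>
      refine ⟨fun i => i.elim0, ?_⟩
      rw [mem_pathSet_iff]
      exact ⟨fun i => i.elim0, fun i hi => by omega⟩
  | succ k ih =>
      rcases k with _ | k
      · -- length 1
        obtain ⟨u⟩ := ‹Nonempty V›
        obtain ⟨j, s, hs, -, -⟩ := hSC u u
        rw [mem_pathSet_iff] at hs
        refine ⟨fun _ => s 0, ?_⟩
        rw [mem_pathSet_iff]
        exact ⟨fun _ => hs.1 0, fun i hi => by omega⟩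
      · obtain ⟨s, hs⟩ := ih
        rw [mem_pathSet_iff] at hs
        set w := (s (Fin.last k)).2.1 with hw
        obtain ⟨j, t, ht, ht0, -⟩ := hSC w w
        rw [mem_pathSet_iff] at ht
        refine ⟨fun i : Fin (k+2) => if h : (i:ℕ) < k+1 then s ⟨i, h⟩ else t 0, ?_⟩
        rw [mem_pathSet_iff]
        constructor
        · intro i
          by_cases h : (i:ℕ) < k+1 <;> simp [h, hs.1, ht.1]
        · intro i hi
          by_cases h : i + 1 < k + 1
          · have h' : i < k + 1 := Nat.lt_of_succ_lt h
            simp only [h, h', dif_pos]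
            exact hs.2 i h
          · have hik : i = k := by omega
            have h' : i < k + 1 := by omega
            have h2 : ¬ (i + 1 < k + 1) := h
            simp only [h', h2, dif_pos, dif_neg, not_false_iff]
            subst hik
            rw [ht0]
            rfl

lemma maxOver_eq_sup' {α : Type*} (s : Finset α) (hs : s.Nonempty) (f : α → ℝ) :
    sSup (f '' ↑s) = s.sup' hs f := (Finset.sup'_eq_csSup_image s hs f).symm

lemma maxOver_rpow {α : Type*} (s : Finset α) (hs : s.Nonempty) (f : α → ℝ)
    (hf : ∀ a, 0 ≤ f a) {c : ℝ} (hc : 0 ≤ c) :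
    sSup ((fun a => f a ^ c) '' ↑s) = (sSup (f '' ↑s)) ^ c := by
  rw [maxOver_eq_sup' s hs, maxOver_eq_sup' s hs]
  apply le_antisymm
  · apply Finset.sup'_le
    intro a ha
    exact Real.rpow_le_rpow (hf a) (Finset.le_sup' f ha) hc
  · obtain ⟨a, ha, hae⟩ := Finset.exists_mem_eq_sup' hs f
    rw [hae]
    exact Finset.le_sup' (fun a => f a ^ c) ha

/-- for any positive integer `p`, the CJSR is bounded on both sides by the
constrained p-radius: `ρ_p(G,A) ≤ ρ(G,A) ≤ 2^{h(E)/p} · ρ_p(G,A)`. -/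
theorem p_radius_cjsr_bounds {m n : ℕ} (A : Fin m → Matrix (Fin n) (Fin n) ℝ)
    {V : Type*} [Fintype V] [Nonempty V] (E : Finset (V × V × Fin m))
    (hSC : StronglyConnected E) (p : ℕ) (hp : 1 ≤ p) (ρ ρp h : ℝ)
    (hρ : Tendsto (fun k : ℕ =>
        maxOver (pathSet E k) (fun s => frob (prodA A (labels s)) ^ ((1:ℝ)/k)))
      atTop (nhds ρ))
    (hρp : Tendsto (fun k : ℕ =>
        ((((pathSet E k).card : ℝ))⁻¹ *
          ∑ s ∈ pathSet E k, frob (prodA A (labels s)) ^ (p : ℝ)) ^ (1 / ((p : ℝ) * k)))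
      atTop (nhds ρp))
    (hh : Tendsto (fun k : ℕ => Real.logb 2 ((pathSet E k).card : ℝ) / k)
      atTop (nhds h)) :
    ρp ≤ ρ ∧ ρ ≤ (2 : ℝ) ^ (h / (p : ℝ)) * ρp := by
  classical
  have hne : ∀ k, (pathSet E k).Nonempty := pathSet_nonempty hSC
  have hfnn : ∀ (k : ℕ) (s : Fin k → V × V × Fin m),
      0 ≤ frob (prodA A (labels s)) := fun k s => frob_nonneg _
  set N : ℕ → ℝ := fun k => ((pathSet E k).card : ℝ) with hNdef
  set M : ℕ → ℝ :=
    fun k => (pathSet E k).sup' (hne k) (fun s => frob (prodA A (labels s))) with hMdef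
  set S : ℕ → ℝ :=
    fun k => ∑ s ∈ pathSet E k, frob (prodA A (labels s)) ^ (p : ℝ) with hSdef
  have hNpos : ∀ k, 0 < N k := by
    intro k
    have : 0 < (pathSet E k).card := Finset.card_pos.mpr (hne k)
    simp only [hNdef]
    exact_mod_cast this
  have hM0 : ∀ k, 0 ≤ M k := by
    intro k
    obtain ⟨a, ha⟩ := hne k
    exact le_trans (hfnn k a) (Finset.le_sup' (fun s => frob (prodA A (labels s))) ha)
  have hS0 : ∀ k, 0 ≤ S k := fun k =>
    Finset.sum_nonneg fun s _ => Real.rpow_nonneg (hfnn k s) _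
  have hMpS : ∀ k, M k ^ (p : ℝ) ≤ S k := by
    intro k
    obtain ⟨a, ha, hae⟩ :=
      Finset.exists_mem_eq_sup' (hne k) (fun s => frob (prodA A (labels s)))
    simp only [hMdef, hSdef]
    rw [hae]
    exact Finset.single_le_sum (fun s _ => Real.rpow_nonneg (hfnn k s) _) ha
  have hSle : ∀ k, S k ≤ N k * M k ^ (p : ℝ) := by
    intro k
    have := Finset.sum_le_card_nsmul (pathSet E k)
      (fun s => frob (prodA A (labels s)) ^ (p : ℝ))
      (M k ^ (p : ℝ)) (fun s hs =>
        Real.rpow_le_rpow (hfnn k s) (Finset.le_sup' (fun s => frob (prodA A (labels s))) hs) (by positivity))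
    simpa only [hSdef, hNdef, nsmul_eq_mul] using this
  have hpne : (p : ℝ) ≠ 0 := by
    have : p ≠ 0 := by omega
    exact_mod_cast this
  have hexp : ∀ k : ℕ, (p : ℝ) * (1 / ((p : ℝ) * k)) = (1 : ℝ) / k := by
    intro k
    rcases Nat.eq_zero_or_pos k with hk | hk
    · subst hk; simp
    · have hk' : (k : ℝ) ≠ 0 := Nat.cast_ne_zero.mpr hk.ne'
      field_simp
  have hexpnn : ∀ k : ℕ, 0 ≤ 1 / ((p : ℝ) * k) := fun k => by positivity
  have hNSnn : ∀ k, 0 ≤ (N k)⁻¹ * S k := fun k =>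
    mul_nonneg (inv_nonneg.2 (hNpos k).le) (hS0 k)
  -- rewrite hρ in terms of M
  have hmax : ∀ k : ℕ,
      maxOver (pathSet E k) (fun s => frob (prodA A (labels s)) ^ ((1:ℝ)/k))
        = M k ^ ((1:ℝ)/k) := by
    intro k
    simp only [maxOver]
    rw [maxOver_rpow (pathSet E k) (hne k) (fun s => frob (prodA A (labels s)))
      (hfnn k) (c := (1:ℝ)/k) (by positivity),
      maxOver_eq_sup' _ (hne k)]
  have hρ' : Tendsto (fun k : ℕ => M k ^ ((1:ℝ)/k)) atTop (nhds ρ) :=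
    hρ.congr hmax
  have hρp' : Tendsto (fun k : ℕ => ((N k)⁻¹ * S k) ^ (1 / ((p : ℝ) * k)))
      atTop (nhds ρp) := hρp
  -- inequality 1
  have ineq1 : ∀ k : ℕ,
      ((N k)⁻¹ * S k) ^ (1 / ((p : ℝ) * k)) ≤ M k ^ ((1:ℝ)/k) := by
    intro k
    have h1 : (N k)⁻¹ * S k ≤ M k ^ (p : ℝ) := by
      rw [inv_mul_le_iff₀ (hNpos k)]
      exact hSle k
    calc ((N k)⁻¹ * S k) ^ (1 / ((p : ℝ) * k))
        ≤ (M k ^ (p : ℝ)) ^ (1 / ((p : ℝ) * k)) :=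
          Real.rpow_le_rpow (hNSnn k) h1 (hexpnn k)
      _ = M k ^ ((p : ℝ) * (1 / ((p : ℝ) * k))) := (Real.rpow_mul (hM0 k) _ _).symm
      _ = M k ^ ((1:ℝ)/k) := by rw [hexp k]
  -- inequality 2
  have ineq2 : ∀ k : ℕ,
      M k ^ ((1:ℝ)/k) ≤ (2:ℝ) ^ ((Real.logb 2 (N k) / k) / (p : ℝ)) *
        ((N k)⁻¹ * S k) ^ (1 / ((p : ℝ) * k)) := by
    intro k
    have hNS : N k * ((N k)⁻¹ * S k) = S k :=
      mul_inv_cancel_left₀ (ne_of_gt (hNpos k)) _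
    have hNrw : N k ^ (1 / ((p : ℝ) * k)) =
        (2:ℝ) ^ ((Real.logb 2 (N k) / k) / (p : ℝ)) := by
      have h2 : N k = (2:ℝ) ^ Real.logb 2 (N k) :=
        (Real.rpow_logb (by norm_num) (by norm_num) (hNpos k)).symm
      calc N k ^ (1 / ((p : ℝ) * k))
          = ((2:ℝ) ^ Real.logb 2 (N k)) ^ (1 / ((p : ℝ) * k)) := by rw [← h2]
        _ = (2:ℝ) ^ (Real.logb 2 (N k) * (1 / ((p : ℝ) * k))) :=
            (Real.rpow_mul (by norm_num) _ _).symm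
        _ = (2:ℝ) ^ ((Real.logb 2 (N k) / k) / (p : ℝ)) := by
            congr 1
            rw [mul_one_div, div_div, mul_comm ((p:ℝ)) (k:ℝ)]
    calc M k ^ ((1:ℝ)/k) = M k ^ ((p : ℝ) * (1 / ((p : ℝ) * k))) := by rw [hexp k]
      _ = (M k ^ (p : ℝ)) ^ (1 / ((p : ℝ) * k)) := Real.rpow_mul (hM0 k) _ _
      _ ≤ (S k) ^ (1 / ((p : ℝ) * k)) :=
          Real.rpow_le_rpow (Real.rpow_nonneg (hM0 k) _) (hMpS k) (hexpnn k)
      _ = (N k * ((N k)⁻¹ * S k)) ^ (1 / ((p : ℝ) * k)) := by rw [hNS]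
      _ = N k ^ (1 / ((p : ℝ) * k)) * ((N k)⁻¹ * S k) ^ (1 / ((p : ℝ) * k)) :=
          Real.mul_rpow (hNpos k).le (hNSnn k)
      _ = _ := by rw [hNrw]
  -- limits
  have hc : Tendsto (fun k : ℕ => (2:ℝ) ^ ((Real.logb 2 (N k) / k) / (p : ℝ)))
      atTop (nhds ((2:ℝ) ^ (h / (p : ℝ)))) := by
    have hinner : Tendsto (fun k : ℕ => (Real.logb 2 (N k) / k) / (p : ℝ))
        atTop (nhds (h / (p : ℝ))) := hh.div_const _
    exact ((Real.continuousAt_const_rpow (a := 2) (b := h / (p : ℝ))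
      two_ne_zero).tendsto).comp hinner
  exact ⟨le_of_tendsto_of_tendsto' hρp' hρ' ineq1,
    le_of_tendsto_of_tendsto' hρ' (hc.mul hρp') ineq2⟩
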